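/- arXiv:1710.06261 — 2 statements merged into one kernel-verified Lean document; each statement's English description precedes it below -/
import Mathlib

section
/- Let P = {x ∈ ℝ^n : Ax > b} be a nonempty open polytope, where A ∈ ℝ^{m×n} has rank n, let φ(x) = −Σ_{i=1}^m ln(a_iᵀx − b_i) be its logarithmic barrier, and let f = α·φ with α > 0. Then for every x ∈ P: (1) ∇f(x)ᵀ (A_xᵀA_x)⁻¹ ∇f(x) ≤ α² m; (2) ∇²f(x) = α A_xᵀA_x, so in particular ∇²f(x) ⪯ α A_xᵀA_x in the positive semidefinite order; and (3) for every v ∈ ℝ^n, |tr((A_xᵀA_x)⁻¹ ∇³f(x)[v])| ≤ 2α √n · √(vᵀ A_xᵀA_x v), where ∇³f(x)[v] is the n×n matrix with entries D³f(x)[v, e_i, e_j]. -/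
open Set Matrix

/-- The rescaled constraint matrix `A_x = S_x⁻¹ A`, whose `i`-th row is
`a_i / (a_iᵀx − b_i)`. -/
noncomputable def slackMat (m n : ℕ) (A : Matrix (Fin m) (Fin n) ℝ) (b : Fin m → ℝ)
    (x : Fin n → ℝ) : Matrix (Fin m) (Fin n) ℝ :=
  Matrix.of fun i j => A i j / (A.mulVec x i - b i)

/-- The log-barrier Hessian metric `g(x) = A_xᵀ A_x`. -/
noncomputable def barrierG (m n : ℕ) (A : Matrix (Fin m) (Fin n) ℝ) (b : Fin m → ℝ)
    (x : Fin n → ℝ) : Matrix (Fin n) (Fin n) ℝ :=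
  (slackMat m n A b x)ᵀ * slackMat m n A b x

set_option linter.unusedSectionVars false
set_option maxHeartbeats 1000000


noncomputable def rowCLM (m n : ℕ) (A : Matrix (Fin m) (Fin n) ℝ) (i : Fin m) :
    (Fin n → ℝ) →L[ℝ] ℝ :=
  LinearMap.toContinuousLinearMap ((LinearMap.proj i).comp A.mulVecLin)

@[simp] lemma rowCLM_apply (m n : ℕ) (A : Matrix (Fin m) (Fin n) ℝ) (i : Fin m)
    (w : Fin n → ℝ) : rowCLM m n A i w = A.mulVec w i := rfl

lemma hasFDerivAt_barrier (m n : ℕ) (A : Matrix (Fin m) (Fin n) ℝ) (b : Fin m → ℝ)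
    (α : ℝ) (x : Fin n → ℝ) (hx : ∀ i, 0 < A.mulVec x i - b i) :
    HasFDerivAt (fun y => α * (-(∑ i, Real.log (A.mulVec y i - b i))))
      (α • (-(∑ i, (A.mulVec x i - b i)⁻¹ • rowCLM m n A i))) x := by
  have h : ∀ i : Fin m, HasFDerivAt (fun y => Real.log (A.mulVec y i - b i))
      ((A.mulVec x i - b i)⁻¹ • rowCLM m n A i) x := by
    intro i
    have h1 : HasFDerivAt (fun y => A.mulVec y i - b i) (rowCLM m n A i) x :=
      (rowCLM m n A i).hasFDerivAt.sub_const (b i)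
    exact h1.log (ne_of_gt (hx i))
  exact ((HasFDerivAt.fun_sum (fun i _ => h i)).neg).const_mul α

section
variable (m n : ℕ) (A : Matrix (Fin m) (Fin n) ℝ) (b : Fin m → ℝ) (α : ℝ)

lemma contDiffAt_barrier (x : Fin n → ℝ) (hx : ∀ i, 0 < A.mulVec x i - b i) :
    ContDiffAt ℝ 3 (fun y => α * (-(∑ i, Real.log (A.mulVec y i - b i)))) x := by
  have h : ∀ i : Fin m, ContDiffAt ℝ 3 (fun y => Real.log (A.mulVec y i - b i)) x := by
    intro i
    have h1 : ContDiff ℝ 3 (fun y => A.mulVec y i - b i) :=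
      ((rowCLM m n A i).contDiff).sub contDiff_const
    exact (Real.contDiffAt_log.2 (ne_of_gt (hx i))).comp x h1.contDiffAt
  exact (contDiffAt_const.mul ((ContDiffAt.sum (fun i _ => h i)).neg))
end

section
variable (m n : ℕ) (A : Matrix (Fin m) (Fin n) ℝ) (b : Fin m → ℝ) (α : ℝ)

lemma hasFDerivAt_lvl2 (w : Fin n → ℝ) (x : Fin n → ℝ) (hx : ∀ i, 0 < A.mulVec x i - b i) :
    HasFDerivAt (fun y => α * (-(∑ i, (A.mulVec y i - b i)⁻¹ * A.mulVec w i)))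
      (∑ i, (α * A.mulVec w i * ((A.mulVec x i - b i) ^ 2)⁻¹) • rowCLM m n A i) x := by
  have h : ∀ i : Fin m, HasFDerivAt (fun y => (A.mulVec y i - b i)⁻¹ * A.mulVec w i)
      ((A.mulVec w i) • (-((A.mulVec x i - b i) ^ 2)⁻¹ • rowCLM m n A i)) x := by
    intro i
    have h1 : HasFDerivAt (fun y => A.mulVec y i - b i) (rowCLM m n A i) x :=
      (rowCLM m n A i).hasFDerivAt.sub_const (b i)
    have h2 : HasDerivAt (fun t : ℝ => t⁻¹) (-((A.mulVec x i - b i) ^ 2)⁻¹)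
        (A.mulVec x i - b i) := hasDerivAt_inv (ne_of_gt (hx i))
    exact (h2.comp_hasFDerivAt x h1).mul_const _
  have hsum : HasFDerivAt (fun y => ∑ i, (A.mulVec y i - b i)⁻¹ * A.mulVec w i)
      (∑ i, (A.mulVec w i) • (-((A.mulVec x i - b i) ^ 2)⁻¹ • rowCLM m n A i)) x :=
    HasFDerivAt.fun_sum (fun i _ => h i)
  refine (((hsum.neg).const_mul α).congr_fderiv ?_)
  symm
  ext v
  simp [Finset.mul_sum, ContinuousLinearMap.sum_apply]
  ring_nf

lemma hasFDerivAt_lvl3 (u w : Fin n → ℝ) (x : Fin n → ℝ) (hx : ∀ i, 0 < A.mulVec x i - b i) :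
    HasFDerivAt (fun y => ∑ i, α * A.mulVec w i * ((A.mulVec y i - b i) ^ 2)⁻¹ * A.mulVec u i)
      (∑ i, (-2 * α * A.mulVec w i * A.mulVec u i * ((A.mulVec x i - b i) ^ 3)⁻¹) •
        rowCLM m n A i) x := by
  have h : ∀ i : Fin m, HasFDerivAt
      (fun y => α * A.mulVec w i * ((A.mulVec y i - b i) ^ 2)⁻¹ * A.mulVec u i)
      ((-2 * α * A.mulVec w i * A.mulVec u i * ((A.mulVec x i - b i) ^ 3)⁻¹) •
        rowCLM m n A i) x := by
    intro i
    have h1 : HasFDerivAt (fun y => A.mulVec y i - b i) (rowCLM m n A i) x :=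
      (rowCLM m n A i).hasFDerivAt.sub_const (b i)
    have h2 : HasDerivAt (fun t : ℝ => (t ^ 2)⁻¹)
        (-(2 * (A.mulVec x i - b i) ^ 1) / ((A.mulVec x i - b i) ^ 2) ^ 2)
        (A.mulVec x i - b i) :=
      (hasDerivAt_pow 2 (A.mulVec x i - b i)).inv (pow_ne_zero 2 (ne_of_gt (hx i)))
    have h4 := ((h2.comp_hasFDerivAt x h1).const_mul (α * A.mulVec w i)).mul_const
      (A.mulVec u i)
    refine h4.congr_fderiv ?_
    symm
    ext v
    have hs := ne_of_gt (hx i)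
    simp [smul_smul]
    field_simp
  exact HasFDerivAt.fun_sum (fun i _ => h i)
end

section
variable (m n : ℕ) (A : Matrix (Fin m) (Fin n) ℝ) (b : Fin m → ℝ) (α : ℝ)
  (f : (Fin n → ℝ) → ℝ)
  (hf : ∀ y, f y = α * (-(∑ i, Real.log (A.mulVec y i - b i))))

lemma isOpen_U : IsOpen {y : Fin n → ℝ | ∀ i, 0 < A.mulVec y i - b i} := by
  have : {y : Fin n → ℝ | ∀ i, 0 < A.mulVec y i - b i} =
      ⋂ i, {y | 0 < A.mulVec y i - b i} := by ext y; simp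
  rw [this]
  exact isOpen_iInter_of_finite fun i =>
    isOpen_lt continuous_const (((rowCLM m n A i).continuous).sub continuous_const)

include hf in
lemma fderiv_f_apply (x : Fin n → ℝ) (hx : ∀ i, 0 < A.mulVec x i - b i) (w : Fin n → ℝ) :
    fderiv ℝ f x w = α * (-(∑ i, (A.mulVec x i - b i)⁻¹ * A.mulVec w i)) := by
  have hfe : f = fun y => α * (-(∑ i, Real.log (A.mulVec y i - b i))) := funext hf
  rw [hfe, (hasFDerivAt_barrier m n A b α x hx).fderiv]
  simp [Finset.mul_sum, ContinuousLinearMap.sum_apply]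

include hf in
lemma contDiffAt_f (x : Fin n → ℝ) (hx : ∀ i, 0 < A.mulVec x i - b i) :
    ContDiffAt ℝ 3 f x := by
  have hfe : f = fun y => α * (-(∑ i, Real.log (A.mulVec y i - b i))) := funext hf
  rw [hfe]; exact contDiffAt_barrier m n A b α x hx

include hf in
lemma second_deriv_apply (x : Fin n → ℝ) (hx : ∀ i, 0 < A.mulVec x i - b i)
    (u w : Fin n → ℝ) :
    iteratedFDeriv ℝ 2 f x ![u, w] =
      ∑ i, α * A.mulVec w i * ((A.mulVec x i - b i) ^ 2)⁻¹ * A.mulVec u i := by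
  have hU : {y : Fin n → ℝ | ∀ i, 0 < A.mulVec y i - b i} ∈ nhds x :=
    (isOpen_U m n A b).mem_nhds hx
  have hdiff : DifferentiableAt ℝ (fderiv ℝ f) x :=
    (((contDiffAt_f m n A b α f hf x hx).fderiv_right
      (m := 1) (by norm_num))).differentiableAt (by norm_num)
  have hev : (fun z => fderiv ℝ f z w) =ᶠ[nhds x]
      (fun z => α * (-(∑ i, (A.mulVec z i - b i)⁻¹ * A.mulVec w i))) := by
    filter_upwards [hU] with z hz
    exact fderiv_f_apply m n A b α f hf z hz w
  have h2 := (hasFDerivAt_lvl2 m n A b α w x hx).fderiv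
  have key : fderiv ℝ (fun z => fderiv ℝ f z w) x u =
      ∑ i, α * A.mulVec w i * ((A.mulVec x i - b i) ^ 2)⁻¹ * A.mulVec u i := by
    rw [hev.fderiv_eq, h2]
    simp [ContinuousLinearMap.sum_apply]
  rw [iteratedFDeriv_two_apply]
  have hflip : fderiv ℝ (fun z => fderiv ℝ f z w) x =
      (fderiv ℝ (fderiv ℝ f) x).flip w := by
    rw [fderiv_clm_apply hdiff (differentiableAt_const w)]
    simp
  rw [hflip] at key
  simpa using key
end

section
variable (m n : ℕ) (A : Matrix (Fin m) (Fin n) ℝ) (b : Fin m → ℝ) (α : ℝ)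
  (f : (Fin n → ℝ) → ℝ)
  (hf : ∀ y, f y = α * (-(∑ i, Real.log (A.mulVec y i - b i))))

include hf in
lemma third_deriv_apply (x : Fin n → ℝ) (hx : ∀ i, 0 < A.mulVec x i - b i)
    (v u w : Fin n → ℝ) :
    iteratedFDeriv ℝ 3 f x ![v, u, w] =
      ∑ i, -2 * α * A.mulVec w i * A.mulVec u i * ((A.mulVec x i - b i) ^ 3)⁻¹ *
        A.mulVec v i := by
  have hU : {y : Fin n → ℝ | ∀ i, 0 < A.mulVec y i - b i} ∈ nhds x :=
    (isOpen_U m n A b).mem_nhds hx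
  have hdiff : DifferentiableAt ℝ (iteratedFDeriv ℝ 2 f) x :=
    ((contDiffAt_f m n A b α f hf x hx).iteratedFDeriv_right (i := 2) (m := 1)
      (by norm_num)).differentiableAt (by norm_num)
  set e := ContinuousMultilinearMap.apply ℝ (fun _ : Fin 2 => (Fin n → ℝ)) ℝ ![u, w] with he
  have hcomp : fderiv ℝ (fun y => iteratedFDeriv ℝ 2 f y ![u, w]) x =
      e.comp (fderiv ℝ (iteratedFDeriv ℝ 2 f) x) :=
    (e.hasFDerivAt.comp x hdiff.hasFDerivAt).fderiv
  have hev : (fun y => iteratedFDeriv ℝ 2 f y ![u, w]) =ᶠ[nhds x]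
      (fun y => ∑ i, α * A.mulVec w i * ((A.mulVec y i - b i) ^ 2)⁻¹ * A.mulVec u i) := by
    filter_upwards [hU] with z hz
    exact second_deriv_apply m n A b α f hf z hz u w
  have h3 := (hasFDerivAt_lvl3 m n A b α u w x hx).fderiv
  have key : fderiv ℝ (fun y => iteratedFDeriv ℝ 2 f y ![u, w]) x v =
      ∑ i, -2 * α * A.mulVec w i * A.mulVec u i * ((A.mulVec x i - b i) ^ 3)⁻¹ *
        A.mulVec v i := by
    rw [hev.fderiv_eq, h3]
    simp [ContinuousLinearMap.sum_apply]
  rw [iteratedFDeriv_succ_apply_left]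
  have h0 : (![v, u, w] : Fin 3 → (Fin n → ℝ)) 0 = v := rfl
  have ht : Fin.tail (![v, u, w] : Fin 3 → (Fin n → ℝ)) = ![u, w] := rfl
  rw [h0, ht, ← key, hcomp]
  rfl
end

section LA
variable {m n : ℕ} {A : Matrix (Fin m) (Fin n) ℝ} {b : Fin m → ℝ} {x : Fin n → ℝ}

lemma mulVec_inj (hrank : A.rank = n) {v : Fin n → ℝ} (hv : A.mulVec v = 0) : v = 0 := by
  have h1 := LinearMap.finrank_range_add_finrank_ker A.mulVecLin
  rw [show Module.finrank ℝ (LinearMap.range A.mulVecLin) = A.rank from rfl, hrank] at h1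
  simp only [Module.finrank_pi, Fintype.card_fin] at h1
  have h2 : Module.finrank ℝ (LinearMap.ker A.mulVecLin) = 0 := by omega
  have h3 : LinearMap.ker A.mulVecLin = ⊥ := Submodule.finrank_eq_zero.1 h2
  have : v ∈ LinearMap.ker A.mulVecLin := by
    simpa [Matrix.mulVecLin_apply] using hv
  simpa [h3] using this

lemma slack_mulVec (v : Fin n → ℝ) (i : Fin m) :
    (slackMat m n A b x).mulVec v i = A.mulVec v i / (A.mulVec x i - b i) := by
  simp [slackMat, mulVec, dotProduct, Finset.sum_div, div_mul_eq_mul_div]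

lemma quadG (v : Fin n → ℝ) :
    v ⬝ᵥ (barrierG m n A b x).mulVec v =
      ∑ i, ((slackMat m n A b x).mulVec v i) ^ 2 := by
  rw [barrierG, ← Matrix.mulVec_mulVec, Matrix.dotProduct_mulVec, Matrix.vecMul_transpose]
  simp [dotProduct, sq]

lemma slack_mulVec_eq_zero (hs : ∀ i, 0 < A.mulVec x i - b i) {v : Fin n → ℝ}
    (hv : (slackMat m n A b x).mulVec v = 0) : A.mulVec v = 0 := by
  funext i
  have := congrFun hv i
  rw [slack_mulVec] at this
  simpa [div_eq_zero_iff, (hs i).ne'] using this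

lemma posDefG (hrank : A.rank = n) (hs : ∀ i, 0 < A.mulVec x i - b i) :
    (barrierG m n A b x).PosDef := by
  refine Matrix.PosDef.of_dotProduct_mulVec_pos
    (by simpa [barrierG] using Matrix.isHermitian_conjTranspose_mul_self (slackMat m n A b x))
    fun v hv => ?_
  have h1 : v ⬝ᵥ (barrierG m n A b x).mulVec v = ∑ i, ((slackMat m n A b x).mulVec v i) ^ 2 :=
    quadG v
  have h2 : (slackMat m n A b x).mulVec v ≠ 0 := by
    intro h
    exact hv (mulVec_inj hrank (slack_mulVec_eq_zero hs h))
  have h3 : ∃ i, (slackMat m n A b x).mulVec v i ≠ 0 := by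
    by_contra h
    push_neg at h
    exact h2 (funext h)
  obtain ⟨i, hi⟩ := h3
  simp only [star_trivial]
  rw [h1]
  exact Finset.sum_pos' (fun j _ => sq_nonneg _)
    ⟨i, Finset.mem_univ i, by positivity⟩
end LA

section Proj
variable {m n : ℕ} {A : Matrix (Fin m) (Fin n) ℝ} {b : Fin m → ℝ} {x : Fin n → ℝ}
  (hrank : A.rank = n) (hs : ∀ i, 0 < A.mulVec x i - b i)

local notation "B" => slackMat m n A b x
local notation "G" => barrierG m n A b x

include hrank hs

lemma G_inv_mul : (G)⁻¹ * G = 1 :=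
  Matrix.nonsing_inv_mul _ (posDefG hrank hs).det_pos.ne'.isUnit

lemma G_mul_inv : G * (G)⁻¹ = 1 :=
  Matrix.mul_nonsing_inv _ (posDefG hrank hs).det_pos.ne'.isUnit

lemma G_symm : (G)ᵀ = G := by
  rw [show G = (B)ᵀ * B from rfl, Matrix.transpose_mul, Matrix.transpose_transpose]

lemma G_inv_symm : (G)⁻¹ᵀ = (G)⁻¹ := by
  rw [Matrix.transpose_nonsing_inv, G_symm hrank hs]

lemma proj_symm : (B * (G)⁻¹ * (B)ᵀ)ᵀ = B * (G)⁻¹ * (B)ᵀ := by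
  simp [Matrix.transpose_mul, Matrix.mul_assoc, G_inv_symm hrank hs]

lemma proj_idem : (B * (G)⁻¹ * (B)ᵀ) * (B * (G)⁻¹ * (B)ᵀ) = B * (G)⁻¹ * (B)ᵀ := by
  have h : (B)ᵀ * B = G := rfl
  calc (B * (G)⁻¹ * (B)ᵀ) * (B * (G)⁻¹ * (B)ᵀ)
      = B * (G)⁻¹ * ((B)ᵀ * B) * ((G)⁻¹ * (B)ᵀ) := by
        simp only [Matrix.mul_assoc]
    _ = B * ((G)⁻¹ * G) * ((G)⁻¹ * (B)ᵀ) := by rw [h]; simp only [Matrix.mul_assoc]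
    _ = B * (G)⁻¹ * (B)ᵀ := by rw [G_inv_mul hrank hs]; simp only [Matrix.mul_one, Matrix.mul_assoc]

lemma proj_diag_sum (k : Fin m) :
    (B * (G)⁻¹ * (B)ᵀ) k k = ∑ l, (B * (G)⁻¹ * (B)ᵀ) k l ^ 2 := by
  conv_lhs => rw [← proj_idem hrank hs]
  rw [Matrix.mul_apply]
  refine Finset.sum_congr rfl fun l _ => ?_
  rw [sq]
  congr 1
  conv_lhs => rw [← proj_symm hrank hs]
  rfl

lemma proj_diag_nonneg (k : Fin m) : 0 ≤ (B * (G)⁻¹ * (B)ᵀ) k k := by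
  rw [proj_diag_sum hrank hs]
  exact Finset.sum_nonneg fun l _ => sq_nonneg _

lemma proj_diag_le_one (k : Fin m) : (B * (G)⁻¹ * (B)ᵀ) k k ≤ 1 := by
  have h := proj_diag_sum hrank hs k
  have h2 : (B * (G)⁻¹ * (B)ᵀ) k k ^ 2 ≤ ∑ l, (B * (G)⁻¹ * (B)ᵀ) k l ^ 2 :=
    Finset.single_le_sum (f := fun l => (B * (G)⁻¹ * (B)ᵀ) k l ^ 2)
      (fun l _ => sq_nonneg _) (Finset.mem_univ k)
  nlinarith [h, h2]

lemma proj_trace : (B * (G)⁻¹ * (B)ᵀ).trace = (n : ℝ) := by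
  rw [Matrix.trace_mul_comm, ← Matrix.mul_assoc]
  have h : (B)ᵀ * B = G := rfl
  rw [h, G_mul_inv hrank hs]
  simp [Matrix.trace_one]
end Proj


/-- the smoothness parameters of `f = α·φ` for the logarithmic
barrier `φ` are `M₁ = α²m` (gradient), `M₂ = α` (Hessian) and `M₃ = 2α√n`
(third derivative trace). -/
theorem log_barrier_parameters
    (m n : ℕ) (A : Matrix (Fin m) (Fin n) ℝ) (b : Fin m → ℝ)
    (hrank : A.rank = n)
    (P : Set (Fin n → ℝ)) (hP : P = {x | ∀ i, b i < A.mulVec x i})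
    (hPne : P.Nonempty)
    (α : ℝ) (hα : 0 < α)
    (f : (Fin n → ℝ) → ℝ)
    (hf : ∀ x, f x = α * (-(∑ i, Real.log (A.mulVec x i - b i))))
    (x : Fin n → ℝ) (hx : x ∈ P) :
    (fun k => fderiv ℝ f x (Pi.single k 1)) ⬝ᵥ
        (barrierG m n A b x)⁻¹.mulVec (fun k => fderiv ℝ f x (Pi.single k 1)) ≤
      α ^ 2 * m ∧
    (Matrix.of fun i j =>
        iteratedFDeriv ℝ 2 f x ![Pi.single i 1, Pi.single j 1]) =
      α • barrierG m n A b x ∧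
    (α • barrierG m n A b x -
        Matrix.of fun i j =>
          iteratedFDeriv ℝ 2 f x ![Pi.single i 1, Pi.single j 1]).PosSemidef ∧
    ∀ v : Fin n → ℝ,
      |((barrierG m n A b x)⁻¹ *
          Matrix.of fun i j =>
            iteratedFDeriv ℝ 3 f x ![v, Pi.single i 1, Pi.single j 1]).trace| ≤
        2 * α * Real.sqrt n * Real.sqrt (v ⬝ᵥ (barrierG m n A b x).mulVec v) := by
  have hs : ∀ i, 0 < A.mulVec x i - b i := by
    rw [hP] at hx
    intro i
    exact sub_pos.2 (hx i)
  have hAe : ∀ (k : Fin n) (i : Fin m), A.mulVec (Pi.single k 1) i = A i k := by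
    intro k i
    simp [Matrix.mulVec_single]
  -- Part 2 first
  have hpart2 : (Matrix.of fun i j =>
      iteratedFDeriv ℝ 2 f x ![Pi.single i 1, Pi.single j 1]) =
      α • barrierG m n A b x := by
    ext i j
    rw [Matrix.of_apply, second_deriv_apply m n A b α f hf x hs]
    simp only [Matrix.smul_apply, barrierG, Matrix.mul_apply, Matrix.transpose_apply,
      slackMat, Matrix.of_apply, smul_eq_mul, hAe]
    rw [Finset.mul_sum]
    refine Finset.sum_congr rfl fun k _ => ?_
    have hk := (hs k).ne'
    field_simp
  refine ⟨?_, hpart2, ?_, ?_⟩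
  · -- Part 1
    set B := slackMat m n A b x with hB
    set G := barrierG m n A b x with hG
    set p : Fin n → ℝ := (B)ᵀ.mulVec (fun _ => 1) with hp
    have hpk : ∀ k, p k = ∑ i, A i k / (A.mulVec x i - b i) := by
      intro k
      simp [hp, Matrix.mulVec, dotProduct, hB, slackMat]
    have hg : (fun k => fderiv ℝ f x (Pi.single k 1)) = (-α) • p := by
      funext k
      rw [fderiv_f_apply m n A b α f hf x hs]
      have hrhs : ((-α) • p) k = -(α * ∑ i, A i k / (A.mulVec x i - b i)) := by
        simp [hpk k]
      rw [hrhs]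
      simp only [hAe]
      rw [mul_neg]
      refine congrArg Neg.neg (congrArg (α * ·) (Finset.sum_congr rfl fun i _ => ?_))
      rw [div_eq_mul_inv, mul_comm]
    rw [hg]
    set u : Fin n → ℝ := (G)⁻¹.mulVec p with hu
    set wv : Fin m → ℝ := B.mulVec u with hwv
    have hsmul : (G)⁻¹.mulVec ((-α) • p) = (-α) • u := by
      rw [Matrix.mulVec_smul, hu]
    rw [hsmul]
    have hdot : ((-α) • p) ⬝ᵥ ((-α) • u) = α ^ 2 * (p ⬝ᵥ u) := by
      rw [smul_dotProduct, dotProduct_smul]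
      simp [smul_eq_mul]; ring
    rw [hdot]
    have h1 : p ⬝ᵥ u = ∑ k, wv k := by
      rw [dotProduct_comm, hp, Matrix.dotProduct_mulVec, Matrix.vecMul_transpose,
        ← hwv]
      simp [dotProduct]
    have h2 : p ⬝ᵥ u = ∑ k, wv k ^ 2 := by
      have hq : ∑ k, wv k ^ 2 = u ⬝ᵥ G.mulVec u := by
        rw [hG, quadG, hwv]
      have hGu : G.mulVec u = p := by
        rw [hu, Matrix.mulVec_mulVec, G_mul_inv hrank hs, Matrix.one_mulVec]
      rw [hq, hGu, dotProduct_comm]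
    have hcs : (∑ k, wv k) ^ 2 ≤ (∑ k, wv k ^ 2) * m := by
      have := Finset.sum_mul_sq_le_sq_mul_sq Finset.univ wv (fun _ => 1)
      simpa using this
    have ht0 : 0 ≤ ∑ k, wv k := by
      rw [← h1, h2]
      exact Finset.sum_nonneg fun k _ => sq_nonneg _
    have htm : p ⬝ᵥ u ≤ m := by
      rw [h1]
      rcases eq_or_lt_of_le ht0 with h | h
      · exact le_trans h.symm.le (Nat.cast_nonneg m)
      · nlinarith [h1, h2, hcs]
    exact mul_le_mul_of_nonneg_left htm (sq_nonneg α)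
  · -- PosSemidef
    rw [hpart2, sub_self]
    exact Matrix.PosSemidef.zero
  · -- Part 3
    intro v
    set B := slackMat m n A b x with hB
    set G := barrierG m n A b x with hG
    set wv : Fin m → ℝ := B.mulVec v with hwv
    have hwvk : ∀ k, wv k = A.mulVec v k / (A.mulVec x k - b k) := fun k => slack_mulVec v k
    have hT : (Matrix.of fun i j =>
        iteratedFDeriv ℝ 3 f x ![v, Pi.single i 1, Pi.single j 1]) =
        (-(2 * α)) • ((B)ᵀ * Matrix.diagonal wv * B) := by
      ext i j
      rw [Matrix.of_apply, third_deriv_apply m n A b α f hf x hs]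
      simp only [Matrix.smul_apply, Matrix.mul_apply, Matrix.mul_diagonal,
        Matrix.transpose_apply, smul_eq_mul, hAe, hB, slackMat, Matrix.of_apply,
        Matrix.diagonal_apply, mul_ite, mul_zero, Finset.sum_ite_eq',
        Finset.mem_univ, if_true]
      rw [Finset.mul_sum]
      refine Finset.sum_congr rfl fun k _ => ?_
      rw [hwvk k]
      have hk := (hs k).ne'
      field_simp
    rw [hT, Matrix.mul_smul, Matrix.trace_smul]
    set Pm := B * (G)⁻¹ * (B)ᵀ with hPm
    have htr : ((G)⁻¹ * ((B)ᵀ * Matrix.diagonal wv * B)).trace =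
        ∑ k, Pm k k * wv k := by
      have e1 : (G)⁻¹ * ((B)ᵀ * Matrix.diagonal wv * B) =
          ((G)⁻¹ * (B)ᵀ * Matrix.diagonal wv) * B := by
        simp only [Matrix.mul_assoc]
      rw [e1, Matrix.trace_mul_comm]
      have e2 : B * ((G)⁻¹ * (B)ᵀ * Matrix.diagonal wv) = Pm * Matrix.diagonal wv := by
        rw [hPm]; simp only [Matrix.mul_assoc]
      rw [e2, Matrix.trace]
      refine Finset.sum_congr rfl fun k _ => ?_
      simp [Matrix.mul_diagonal, Matrix.diag_apply]
    rw [htr]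
    have hσ0 : ∀ k, 0 ≤ Pm k k := proj_diag_nonneg hrank hs
    have hσ1 : ∀ k, Pm k k ≤ 1 := proj_diag_le_one hrank hs
    have hσtr : ∑ k, Pm k k = (n : ℝ) := by
      have := proj_trace hrank hs
      rw [Matrix.trace] at this
      exact this
    have hq : v ⬝ᵥ G.mulVec v = ∑ k, wv k ^ 2 := by rw [hG, quadG, hwv]
    have hcs : (∑ k, Pm k k * wv k) ^ 2 ≤ (∑ k, (Pm k k) ^ 2) * (∑ k, wv k ^ 2) :=
      Finset.sum_mul_sq_le_sq_mul_sq Finset.univ _ _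
    have hσsq : (∑ k, (Pm k k) ^ 2) ≤ (n : ℝ) := by
      rw [← hσtr]
      refine Finset.sum_le_sum fun k _ => ?_
      nlinarith [hσ0 k, hσ1 k]
    have hwsq : 0 ≤ ∑ k, wv k ^ 2 := Finset.sum_nonneg fun k _ => sq_nonneg _
    have hkey : (∑ k, Pm k k * wv k) ^ 2 ≤ (n : ℝ) * (∑ k, wv k ^ 2) :=
      le_trans hcs (mul_le_mul_of_nonneg_right hσsq hwsq)
    have habs : |∑ k, Pm k k * wv k| ≤ Real.sqrt n * Real.sqrt (∑ k, wv k ^ 2) := by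
      rw [← Real.sqrt_sq_eq_abs, ← Real.sqrt_mul (Nat.cast_nonneg n)]
      exact Real.sqrt_le_sqrt hkey
    rw [smul_eq_mul, abs_mul, hq]
    have habs2 : |(-(2 * α))| = 2 * α := by
      rw [abs_neg, abs_of_pos (by linarith)]
    rw [habs2]
    calc 2 * α * |∑ k, Pm k k * wv k| ≤
        2 * α * (Real.sqrt n * Real.sqrt (∑ k, wv k ^ 2)) :=
          mul_le_mul_of_nonneg_left habs (by linarith)
      _ = 2 * α * Real.sqrt n * Real.sqrt (∑ k, wv k ^ 2) := by ring
end

section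
/- Let K ⊆ ℝ^n be a compact convex body and let φ : int(K) → ℝ be a continuous convex function. For u > 0 set F(u) = ∫_K e^{−φ(x)/u} dx. Then for every σ > 0 and every 0 ≤ r < 1: F(σ²/(1+r)) · F(σ²/(1−r)) ≤ (1 − r²)^{−n} · F(σ²)². -/
open Set MeasureTheory

open ENNReal NNReal Pointwise

/-- Indicator of a continuous function on an open set is measurable. -/
lemma measurable_indicator_of_continuousOn {X : Type*} [MeasurableSpace X]
    [TopologicalSpace X] [OpensMeasurableSpace X] {U : Set X} (hU : IsOpen U)
    {g : X → ℝ≥0∞} (hg : ContinuousOn g U) : Measurable (U.indicator g) := by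
  have hUm : MeasurableSet U := hU.measurableSet
  have hres : Measurable (U.restrict g) :=
    (continuousOn_iff_continuous_restrict.mp hg).measurable
  intro t ht
  by_cases h0 : (0 : ℝ≥0∞) ∈ t
  · have : U.indicator g ⁻¹' t = (Subtype.val '' (U.restrict g ⁻¹' t)) ∪ Uᶜ := by
      ext x
      by_cases hx : x ∈ U
      · simp only [mem_preimage, Set.indicator_of_mem hx, mem_union, mem_image, mem_compl_iff]
        constructor
        · intro h; exact Or.inl ⟨⟨x, hx⟩, h, rfl⟩
        · rintro (⟨⟨y, hy⟩, hyt, rfl⟩ | h)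
          · exact hyt
          · exact absurd hx h
      · simp only [mem_preimage, Set.indicator_of_notMem hx, mem_union, mem_compl_iff]
        exact ⟨fun _ => Or.inr hx, fun _ => h0⟩
    rw [this]
    exact (hUm.subtype_image (hres ht)).union hUm.compl
  · have : U.indicator g ⁻¹' t = Subtype.val '' (U.restrict g ⁻¹' t) := by
      ext x
      by_cases hx : x ∈ U
      · simp only [mem_preimage, Set.indicator_of_mem hx, mem_image]
        constructor
        · intro h; exact ⟨⟨x, hx⟩, h, rfl⟩
        · rintro ⟨⟨y, hy⟩, hyt, rfl⟩; exact hyt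
      · simp only [mem_preimage, Set.indicator_of_notMem hx, mem_image]
        constructor
        · intro h; exact absurd h h0
        · rintro ⟨⟨y, hy⟩, _, rfl⟩; exact absurd hy hx
    rw [this]
    exact hUm.subtype_image (hres ht)

/-- AM-GM in `ℝ≥0∞`: `4ab ≤ (a+b)²`. -/
lemma ennreal_four_mul_le_sq (a b : ℝ≥0∞) : 4 * (a * b) ≤ (a + b) ^ 2 := by
  rcases eq_or_ne a ∞ with rfl | ha
  · have : (∞ + b) ^ 2 = ∞ := by simp [pow_two]
    rw [this]; exact le_top
  rcases eq_or_ne b ∞ with rfl | hb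
  · have : (a + ∞) ^ 2 = ∞ := by simp [pow_two]
    rw [this]; exact le_top
  lift a to NNReal using ha
  lift b to NNReal using hb
  have h4 : (4 : ℝ≥0∞) = ((4 : ℝ≥0) : ℝ≥0∞) := by norm_num
  rw [h4, ← ENNReal.coe_mul, ← ENNReal.coe_mul, ← ENNReal.coe_add, ← ENNReal.coe_pow,
    ENNReal.coe_le_coe, ← NNReal.coe_le_coe]
  push_cast
  nlinarith [sq_nonneg ((a : ℝ) - b), NNReal.coe_nonneg a, NNReal.coe_nonneg b]

lemma bm_compact {K L : Set ℝ} (hK : IsCompact K) (hL : IsCompact L)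
    (hKne : K.Nonempty) (hLne : L.Nonempty) :
    volume K + volume L ≤ 2 * volume (image2 (fun x y => (2 : ℝ)⁻¹ • (x + y)) K L) := by
  set k := sSup K with hk
  set l := sInf L with hl
  have hkK : k ∈ K := hK.sSup_mem hKne
  have hlL : l ∈ L := hL.sInf_mem hLne
  set U := (fun x : ℝ => (2 : ℝ)⁻¹ • (x + l)) '' K with hU
  set V := (fun y : ℝ => (2 : ℝ)⁻¹ • (k + y)) '' L with hV
  have hUsub : U ⊆ image2 (fun x y => (2 : ℝ)⁻¹ • (x + y)) K L := by
    rintro _ ⟨x, hx, rfl⟩; exact mem_image2_of_mem hx hlL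
  have hVsub : V ⊆ image2 (fun x y => (2 : ℝ)⁻¹ • (x + y)) K L := by
    rintro _ ⟨y, hy, rfl⟩; exact mem_image2_of_mem hkK hy
  have hUc : IsCompact U := hK.image (by fun_prop)
  have hVc : IsCompact V := hL.image (by fun_prop)
  have hUvol : volume U = ENNReal.ofReal 2⁻¹ * volume K := by
    have : U = AffineMap.homothety l (2 : ℝ)⁻¹ '' K := by
      apply image_congr
      intro x _
      simp [AffineMap.homothety_apply, smul_eq_mul]
      ring
    rw [this, Measure.addHaar_image_homothety]
    norm_num [abs_of_nonneg]
  have hVvol : volume V = ENNReal.ofReal 2⁻¹ * volume L := by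
    have : V = AffineMap.homothety k (2 : ℝ)⁻¹ '' L := by
      apply image_congr
      intro y _
      simp [AffineMap.homothety_apply, smul_eq_mul]
      ring
    rw [this, Measure.addHaar_image_homothety]
    norm_num [abs_of_nonneg]
  have hUle : ∀ u ∈ U, u ≤ (2 : ℝ)⁻¹ * (k + l) := by
    rintro _ ⟨x, hx, rfl⟩
    have : x ≤ k := le_csSup hK.bddAbove hx
    simp only [smul_eq_mul]
    nlinarith
  have hVge : ∀ v ∈ V, (2 : ℝ)⁻¹ * (k + l) ≤ v := by
    rintro _ ⟨y, hy, rfl⟩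
    have : l ≤ y := csInf_le hL.bddBelow hy
    simp only [smul_eq_mul]
    nlinarith
  have hinter : volume (U ∩ V) = 0 := by
    have : U ∩ V ⊆ {(2 : ℝ)⁻¹ * (k + l)} := by
      rintro z ⟨hzU, hzV⟩
      exact mem_singleton_iff.mpr (le_antisymm (hUle z hzU) (hVge z hzV))
    exact measure_mono_null this (Real.volume_singleton)
  have hunion : volume (U ∪ V) = volume U + volume V := by
    have := measure_union_add_inter (μ := volume) U hVc.measurableSet
    rw [hinter, add_zero] at this
    exact this
  calc volume K + volume L
      = 2 * (ENNReal.ofReal 2⁻¹ * volume K + ENNReal.ofReal 2⁻¹ * volume L) := by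
        rw [mul_add, ← mul_assoc, ← mul_assoc]
        have h2 : (2 : ℝ≥0∞) * ENNReal.ofReal 2⁻¹ = 1 := by
          rw [show (2 : ℝ≥0∞) = ENNReal.ofReal 2 by norm_num, ← ENNReal.ofReal_mul (by norm_num)]
          norm_num
        rw [h2, one_mul, one_mul]
    _ = 2 * volume (U ∪ V) := by rw [hunion, hUvol, hVvol]
    _ ≤ 2 * volume (image2 (fun x y => (2 : ℝ)⁻¹ • (x + y)) K L) := by
        gcongr
        exact union_subset hUsub hVsub

lemma bm_one_dim {A B : Set ℝ} (hA : MeasurableSet A) (hB : MeasurableSet B)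
    (hAne : A.Nonempty) (hBne : B.Nonempty) :
    volume A + volume B ≤ 2 * volume (image2 (fun x y => (2 : ℝ)⁻¹ • (x + y)) A B) := by
  obtain ⟨a, ha⟩ := hAne
  obtain ⟨b, hb⟩ := hBne
  have hA' : volume A = ⨆ S : {S : Set ℝ // S ⊆ A ∧ IsCompact S}, volume (S : Set ℝ) := by
    rw [hA.measure_eq_iSup_isCompact]
    apply le_antisymm
    · refine iSup_le fun S => iSup_le fun h1 => iSup_le fun h2 => ?_
      exact le_iSup_of_le ⟨S, h1, h2⟩ le_rfl
    · refine iSup_le fun S => ?_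
      exact le_iSup_of_le S.1 (le_iSup_of_le S.2.1 (le_iSup_of_le S.2.2 le_rfl))
  have hB' : volume B = ⨆ S : {S : Set ℝ // S ⊆ B ∧ IsCompact S}, volume (S : Set ℝ) := by
    rw [hB.measure_eq_iSup_isCompact]
    apply le_antisymm
    · refine iSup_le fun S => iSup_le fun h1 => iSup_le fun h2 => ?_
      exact le_iSup_of_le ⟨S, h1, h2⟩ le_rfl
    · refine iSup_le fun S => ?_
      exact le_iSup_of_le S.1 (le_iSup_of_le S.2.1 (le_iSup_of_le S.2.2 le_rfl))
  rw [hA', hB']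
  have : Nonempty {S : Set ℝ // S ⊆ A ∧ IsCompact S} := ⟨⟨∅, empty_subset _, isCompact_empty⟩⟩
  have : Nonempty {S : Set ℝ // S ⊆ B ∧ IsCompact S} := ⟨⟨∅, empty_subset _, isCompact_empty⟩⟩
  refine ENNReal.iSup_add_iSup_le fun S T => ?_
  obtain ⟨S, hSA, hSc⟩ := S
  obtain ⟨T, hTB, hTc⟩ := T
  calc volume S + volume T ≤ volume (insert a S) + volume (insert b T) := by
        gcongr <;> exact subset_insert _ _
    _ ≤ 2 * volume (image2 (fun x y => (2 : ℝ)⁻¹ • (x + y)) (insert a S) (insert b T)) :=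
        bm_compact (hSc.insert a) (hTc.insert b) ⟨a, mem_insert _ _⟩ ⟨b, mem_insert _ _⟩
    _ ≤ 2 * volume (image2 (fun x y => (2 : ℝ)⁻¹ • (x + y)) A B) :=
        mul_le_mul_right (measure_mono
          (image2_subset (insert_subset ha hSA) (insert_subset hb hTB))) 2

lemma pl_one_dim_core {f g m : ℝ → ℝ≥0∞} (hf : Measurable f) (hg : Measurable g)
    (hm : Measurable m)
    (hyp : ∀ x y, f x * g y ≤ m ((2 : ℝ)⁻¹ • (x + y)) ^ 2)
    {S : ℝ≥0∞} (hStop : S ≠ ∞)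
    (hfS : ⨆ x, f x = S) (hgS : ⨆ x, g x = S) :
    (∫⁻ x, f x) + (∫⁻ x, g x) ≤ 2 * ∫⁻ x, m x := by
  have hfle : ∀ x, f x ≤ S := fun x => hfS ▸ le_iSup f x
  have hgle : ∀ x, g x ≤ S := fun x => hgS ▸ le_iSup g x
  have hfne : ∀ x, f x ≠ ∞ := fun x => ne_top_of_le_ne_top hStop (hfle x)
  have hgne : ∀ x, g x ≠ ∞ := fun x => ne_top_of_le_ne_top hStop (hgle x)
  set M : ℝ → ℝ≥0∞ := fun x => min (m x) S with hM
  have hMm : Measurable M := hm.min measurable_const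
  have hMne : ∀ x, M x ≠ ∞ := fun x => ne_top_of_le_ne_top hStop (min_le_right _ _)
  have hMle : ∀ x, M x ≤ m x := fun x => min_le_left _ _
  -- layer cake
  have layer : ∀ (h : ℝ → ℝ≥0∞), Measurable h → (∀ x, h x ≠ ∞) →
      ∫⁻ x, h x = ∫⁻ t in Ioi (0:ℝ), volume {a : ℝ | ENNReal.ofReal t < h a} := by
    intro h hh hhne
    have h1 : ∫⁻ x, h x = ∫⁻ x, ENNReal.ofReal ((h x).toReal) :=
      lintegral_congr fun x => (ENNReal.ofReal_toReal (hhne x)).symm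
    rw [h1, lintegral_eq_lintegral_meas_lt volume
      (Filter.Eventually.of_forall fun x => ENNReal.toReal_nonneg)
      hh.ennreal_toReal.aemeasurable]
    refine setLIntegral_congr_fun measurableSet_Ioi
      (fun t ht => ?_)
    congr 1
    ext a
    simp only [mem_setOf_eq]
    exact ((ENNReal.ofReal_lt_iff_lt_toReal (le_of_lt ht) (hhne a))).symm
  -- the pointwise superlevel inequality
  have key : ∀ t ∈ Ioi (0:ℝ),
      volume {a : ℝ | ENNReal.ofReal t < f a} + volume {a : ℝ | ENNReal.ofReal t < g a}
        ≤ 2 * volume {a : ℝ | ENNReal.ofReal t < M a} := by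
    intro t _
    by_cases hts : ENNReal.ofReal t < S
    · have hAne : {a : ℝ | ENNReal.ofReal t < f a}.Nonempty := by
        rw [← hfS] at hts
        obtain ⟨x, hx⟩ := lt_iSup_iff.mp hts
        exact ⟨x, hx⟩
      have hBne : {a : ℝ | ENNReal.ofReal t < g a}.Nonempty := by
        rw [← hgS] at hts
        obtain ⟨x, hx⟩ := lt_iSup_iff.mp hts
        exact ⟨x, hx⟩
      have hAm : MeasurableSet {a : ℝ | ENNReal.ofReal t < f a} := hf measurableSet_Ioi
      have hBm : MeasurableSet {a : ℝ | ENNReal.ofReal t < g a} := hg measurableSet_Ioi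
      have hsub : image2 (fun x y => (2 : ℝ)⁻¹ • (x + y))
          {a : ℝ | ENNReal.ofReal t < f a} {a : ℝ | ENNReal.ofReal t < g a}
          ⊆ {a : ℝ | ENNReal.ofReal t < M a} := by
        rintro _ ⟨x, hx, y, hy, rfl⟩
        simp only [mem_setOf_eq] at hx hy ⊢
        have h1 : ENNReal.ofReal t * ENNReal.ofReal t < f x * g y := ENNReal.mul_lt_mul hx hy
        have h3 : ENNReal.ofReal t < m ((2 : ℝ)⁻¹ • (x + y)) := by
          by_contra hc
          push_neg at hc
          have : m ((2 : ℝ)⁻¹ • (x + y)) ^ 2 ≤ ENNReal.ofReal t * ENNReal.ofReal t := by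
            rw [pow_two]; exact mul_le_mul' hc hc
          exact absurd (h1.trans_le ((hyp x y).trans this)) (lt_irrefl _)
        exact lt_min h3 hts
      calc volume {a : ℝ | ENNReal.ofReal t < f a} + volume {a : ℝ | ENNReal.ofReal t < g a}
          ≤ 2 * volume (image2 (fun x y => (2 : ℝ)⁻¹ • (x + y))
              {a : ℝ | ENNReal.ofReal t < f a} {a : ℝ | ENNReal.ofReal t < g a}) :=
            bm_one_dim hAm hBm hAne hBne
        _ ≤ 2 * volume {a : ℝ | ENNReal.ofReal t < M a} :=
            mul_le_mul_right (measure_mono hsub) 2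
    · push_neg at hts
      have hA : {a : ℝ | ENNReal.ofReal t < f a} = ∅ :=
        eq_empty_iff_forall_notMem.mpr fun a ha =>
          absurd (lt_of_lt_of_le ha (hfle a)) (not_lt.mpr hts)
      have hB : {a : ℝ | ENNReal.ofReal t < g a} = ∅ :=
        eq_empty_iff_forall_notMem.mpr fun a ha =>
          absurd (lt_of_lt_of_le ha (hgle a)) (not_lt.mpr hts)
      simp [hA, hB]
  -- antitone measurability
  have hantf : Measurable fun t : ℝ => volume {a : ℝ | ENNReal.ofReal t < f a} := by
    apply Antitone.measurable
    intro t s hts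
    exact measure_mono fun a ha => lt_of_le_of_lt (ENNReal.ofReal_le_ofReal hts) ha
  calc (∫⁻ x, f x) + (∫⁻ x, g x)
      = ∫⁻ t in Ioi (0:ℝ), (volume {a : ℝ | ENNReal.ofReal t < f a}
          + volume {a : ℝ | ENNReal.ofReal t < g a}) := by
        rw [layer f hf hfne, layer g hg hgne, lintegral_add_left hantf]
    _ ≤ ∫⁻ t in Ioi (0:ℝ), 2 * volume {a : ℝ | ENNReal.ofReal t < M a} :=
        setLIntegral_mono' measurableSet_Ioi key
    _ = 2 * ∫⁻ t in Ioi (0:ℝ), volume {a : ℝ | ENNReal.ofReal t < M a} :=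
        lintegral_const_mul' _ _ (by norm_num)
    _ = 2 * ∫⁻ x, M x := by rw [← layer M hMm hMne]
    _ ≤ 2 * ∫⁻ x, m x := mul_le_mul_right (lintegral_mono hMle) 2

/-- The Prékopa–Leindler property (λ = 1/2 version) of a measure on a real vector-ish space. -/
def IsPLMeasure {E : Type*} [MeasurableSpace E] [AddCommMonoid E] [SMul ℝ E]
    (μ : Measure E) : Prop :=
  ∀ f g m : E → ℝ≥0∞, Measurable f → Measurable g → Measurable m →
    (∀ x y, f x * g y ≤ m ((2 : ℝ)⁻¹ • (x + y)) ^ 2) →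
    (∫⁻ x, f x ∂μ) * (∫⁻ x, g x ∂μ) ≤ (∫⁻ x, m x ∂μ) ^ 2

theorem isPLMeasure_real : IsPLMeasure (volume : Measure ℝ) := by
  intro f g m hf hg hm hyp
  -- truncation to bounded functions
  have trunc : ∀ h : ℝ → ℝ≥0∞, Measurable h →
      ∫⁻ x, h x = ⨆ N : ℕ, ∫⁻ x, min (h x) N := by
    intro h hh
    rw [← lintegral_iSup (fun N => hh.min measurable_const)
      (fun N N' hNN' x => min_le_min le_rfl (by exact_mod_cast Nat.cast_le.mpr hNN'))]
    apply lintegral_congr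
    intro x
    apply le_antisymm
    · rcases eq_or_ne (h x) ∞ with he | he
      · rw [he]
        have : ∀ N : ℕ, min (∞:ℝ≥0∞) (N:ℝ≥0∞) = (N:ℝ≥0∞) := fun N => min_eq_right le_top
        calc (∞:ℝ≥0∞) = ⨆ N : ℕ, (N:ℝ≥0∞) := iSup_natCast.symm
          _ ≤ ⨆ N : ℕ, min (∞:ℝ≥0∞) (N:ℝ≥0∞) := by
              apply iSup_mono
              intro N
              rw [this N]
        -- then rewrite he
      · obtain ⟨N, hN⟩ := ENNReal.exists_nat_gt he
        exact le_iSup_of_le N (le_min le_rfl hN.le)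
    · exact iSup_le fun N => min_le_left _ _
  rw [trunc f hf, trunc g hg, ENNReal.iSup_mul]
  refine iSup_le fun N => ?_
  rw [ENNReal.mul_iSup]
  refine iSup_le fun N' => ?_
  set fN : ℝ → ℝ≥0∞ := fun x => min (f x) N with hfN
  set gN : ℝ → ℝ≥0∞ := fun x => min (g x) N' with hgN
  have hfNm : Measurable fN := hf.min measurable_const
  have hgNm : Measurable gN := hg.min measurable_const
  have hypN : ∀ x y, fN x * gN y ≤ m ((2 : ℝ)⁻¹ • (x + y)) ^ 2 := fun x y =>
    (mul_le_mul' (min_le_left _ _) (min_le_left _ _)).trans (hyp x y)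
  rcases eq_or_ne (∫⁻ x, fN x) 0 with hz | hz
  · rw [hz, zero_mul]; exact zero_le
  rcases eq_or_ne (∫⁻ x, gN x) 0 with hz' | hz'
  · rw [hz', mul_zero]; exact zero_le
  set Sf := ⨆ x, fN x with hSf
  set Sg := ⨆ x, gN x with hSg
  have hSf0 : Sf ≠ 0 := by
    intro h0
    apply hz
    have : ∀ x, fN x = 0 := ENNReal.iSup_eq_zero.mp h0
    simp [lintegral_congr this]
  have hSg0 : Sg ≠ 0 := by
    intro h0
    apply hz'
    have : ∀ x, gN x = 0 := ENNReal.iSup_eq_zero.mp h0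
    simp [lintegral_congr this]
  have hSftop : Sf ≠ ∞ :=
    ne_top_of_le_ne_top (natCast_ne_top N) (iSup_le fun x => min_le_right _ _)
  have hSgtop : Sg ≠ ∞ :=
    ne_top_of_le_ne_top (natCast_ne_top N') (iSup_le fun x => min_le_right _ _)
  set c : ℝ≥0∞ := ((NNReal.sqrt (Sg.toNNReal / Sf.toNNReal) : ℝ≥0) : ℝ≥0∞) with hc
  have hc0 : c ≠ 0 := by
    rw [hc, ENNReal.coe_ne_zero, Ne, NNReal.sqrt_eq_zero]
    exact div_ne_zero (ENNReal.toNNReal_ne_zero.mpr ⟨hSg0, hSgtop⟩)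
      (ENNReal.toNNReal_ne_zero.mpr ⟨hSf0, hSftop⟩)
  have hctop : c ≠ ∞ := ENNReal.coe_ne_top
  have hcsq : c ^ 2 = Sg / Sf := by
    rw [hc, ← ENNReal.coe_pow, NNReal.sq_sqrt,
      ENNReal.coe_div (ENNReal.toNNReal_ne_zero.mpr ⟨hSf0, hSftop⟩),
      ENNReal.coe_toNNReal hSgtop, ENNReal.coe_toNNReal hSftop]
  have hcinv : c * c⁻¹ = 1 := ENNReal.mul_inv_cancel hc0 hctop
  set f' : ℝ → ℝ≥0∞ := fun x => c * fN x with hf'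
  set g' : ℝ → ℝ≥0∞ := fun x => c⁻¹ * gN x with hg'
  have hS'f : ⨆ x, f' x = c * Sf := (ENNReal.mul_iSup _ _).symm
  have hS'g : ⨆ x, g' x = c⁻¹ * Sg := (ENNReal.mul_iSup _ _).symm
  have heq : c * Sf = c⁻¹ * Sg := by
    have hSgeq : Sg = c ^ 2 * Sf := by
      rw [hcsq, ENNReal.div_mul_cancel hSf0 hSftop]
    rw [hSgeq, pow_two, mul_assoc, ← mul_assoc c⁻¹ c, ENNReal.inv_mul_cancel hc0 hctop, one_mul]
  have hStop' : c * Sf ≠ ∞ := ENNReal.mul_ne_top hctop hSftop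
  have hcore : (∫⁻ x, f' x) + (∫⁻ x, g' x) ≤ 2 * ∫⁻ x, m x := by
    refine pl_one_dim_core (hfNm.const_mul c) (hgNm.const_mul c⁻¹) hm ?_ hStop' hS'f
      (by rw [hS'g, heq])
    intro x y
    calc f' x * g' y = (c * c⁻¹) * (fN x * gN y) := by
          rw [hf', hg']; ring
      _ = fN x * gN y := by rw [hcinv, one_mul]
      _ ≤ m ((2 : ℝ)⁻¹ • (x + y)) ^ 2 := hypN x y
  have hIf : ∫⁻ x, f' x = c * ∫⁻ x, fN x := lintegral_const_mul' _ _ hctop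
  have hIg : ∫⁻ x, g' x = c⁻¹ * ∫⁻ x, gN x :=
    lintegral_const_mul' _ _ (by simp [ENNReal.inv_ne_top, hc0])
  have hfour : 4 * ((∫⁻ x, fN x) * (∫⁻ x, gN x)) ≤ 4 * (∫⁻ x, m x) ^ 2 := by
    calc 4 * ((∫⁻ x, fN x) * (∫⁻ x, gN x))
        = 4 * ((c * ∫⁻ x, fN x) * (c⁻¹ * ∫⁻ x, gN x)) := by
          rw [mul_mul_mul_comm c _ c⁻¹ _, hcinv, one_mul]
      _ ≤ ((c * ∫⁻ x, fN x) + (c⁻¹ * ∫⁻ x, gN x)) ^ 2 := ennreal_four_mul_le_sq _ _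
      _ ≤ (2 * ∫⁻ x, m x) ^ 2 := by
          apply pow_le_pow_left'
          rw [← hIf, ← hIg]
          exact hcore
      _ = 4 * (∫⁻ x, m x) ^ 2 := by
          rw [mul_pow]
          norm_num
  exact (ENNReal.mul_le_mul_iff_right (by norm_num) (by norm_num)).mp hfour

lemma isPLMeasure_prod {α β : Type*} [MeasurableSpace α] [AddCommMonoid α] [SMul ℝ α]
    [MeasurableSpace β] [AddCommMonoid β] [SMul ℝ β]
    {μ : Measure α} {ν : Measure β} [SFinite μ] [SFinite ν]
    (hμ : IsPLMeasure μ) (hν : IsPLMeasure ν) : IsPLMeasure (μ.prod ν) := by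
  intro f g m hf hg hm hyp
  rw [lintegral_prod _ hf.aemeasurable, lintegral_prod _ hg.aemeasurable,
    lintegral_prod _ hm.aemeasurable]
  refine hμ _ _ _ hf.lintegral_prod_right' hg.lintegral_prod_right' hm.lintegral_prod_right' ?_
  intro x₁ y₁
  refine hν (fun y => f (x₁, y)) (fun y => g (y₁, y))
    (fun y => m ((2:ℝ)⁻¹ • (x₁ + y₁), y)) (hf.comp measurable_prodMk_left)
    (hg.comp measurable_prodMk_left) (hm.comp measurable_prodMk_left) ?_
  intro x₂ y₂
  show f (x₁, x₂) * g (y₁, y₂) ≤ m ((2:ℝ)⁻¹ • (x₁ + y₁), (2:ℝ)⁻¹ • (x₂ + y₂)) ^ 2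
  have : ((2:ℝ)⁻¹ • (x₁ + y₁), (2:ℝ)⁻¹ • (x₂ + y₂)) = (2:ℝ)⁻¹ • ((x₁, x₂) + (y₁, y₂)) := rfl
  rw [this]
  exact hyp (x₁, x₂) (y₁, y₂)

lemma isPLMeasure_comap {E F : Type*} [MeasurableSpace E] [AddCommMonoid E] [SMul ℝ E]
    [MeasurableSpace F] [AddCommMonoid F] [SMul ℝ F]
    {μ : Measure E} {ν : Measure F} (e : E ≃ᵐ F) (hmp : MeasurePreserving e μ ν)
    (hadd : ∀ x y, e (x + y) = e x + e y) (hsmul : ∀ (c : ℝ) x, e (c • x) = c • e x)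
    (h : IsPLMeasure μ) : IsPLMeasure ν := by
  intro f g m hf hg hm hyp
  rw [← hmp.lintegral_comp hf, ← hmp.lintegral_comp hg, ← hmp.lintegral_comp hm]
  refine h (fun x => f (e x)) (fun x => g (e x)) (fun x => m (e x))
    (hf.comp e.measurable) (hg.comp e.measurable) (hm.comp e.measurable) ?_
  intro x y
  show f (e x) * g (e y) ≤ m (e ((2:ℝ)⁻¹ • (x + y))) ^ 2
  have : e ((2:ℝ)⁻¹ • (x + y)) = (2:ℝ)⁻¹ • (e x + e y) := by rw [hsmul, hadd]
  rw [this]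
  exact hyp (e x) (e y)

theorem isPLMeasure_pi : ∀ n : ℕ, IsPLMeasure (volume : Measure (Fin n → ℝ)) := by
  intro n
  induction n with
  | zero =>
    intro f g m hf hg hm hyp
    have huniv : volume (univ : Set (Fin 0 → ℝ)) = 1 := by
      rw [volume_pi, Measure.pi_univ]
      simp
    rw [lintegral_unique, lintegral_unique, lintegral_unique, huniv, mul_one, mul_one, mul_one]
    have h1 := hyp default default
    convert h1 using 3 <;> exact Subsingleton.elim _ _
  | succ n ih =>
    set e' : (Fin (n+1) → ℝ) ≃ᵐ ℝ × (Fin n → ℝ) :=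
      MeasurableEquiv.piFinSuccAbove (fun _ : Fin (n+1) => ℝ) 0 with he'
    have hadd : ∀ z w : Fin (n+1) → ℝ, e' (z + w) = e' z + e' w := fun z w => rfl
    have hsmul : ∀ (c : ℝ) (z : Fin (n+1) → ℝ), e' (c • z) = c • e' z := fun c z => rfl
    refine isPLMeasure_comap (μ := (volume : Measure (ℝ × (Fin n → ℝ)))) e'.symm
      ((volume_preserving_piFinSuccAbove (fun _ : Fin (n+1) => ℝ) 0).symm e') ?_ ?_ ?_
    · intro x y
      apply e'.injective
      rw [MeasurableEquiv.apply_symm_apply, hadd, MeasurableEquiv.apply_symm_apply,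
        MeasurableEquiv.apply_symm_apply]
    · intro c x
      apply e'.injective
      rw [MeasurableEquiv.apply_symm_apply, hsmul, MeasurableEquiv.apply_symm_apply]
    · rw [show (volume : Measure (ℝ × (Fin n → ℝ))) = (volume : Measure ℝ).prod volume from
        Measure.volume_eq_prod _ _]
      exact isPLMeasure_prod isPLMeasure_real ih

/-- `F(u) = ∫_K e^{-φ(x)/u} dx` (the boundary of the convex body has measure zero,
so we integrate over the interior, where `φ` is defined). -/
noncomputable def barF (n : ℕ) (K : Set (Fin n → ℝ)) (φ : (Fin n → ℝ) → ℝ)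
    (u : ℝ) : ℝ :=
  ∫ x in interior K, Real.exp (-φ x / u)

/-- logconcavity bound
`F(σ²/(1+r)) F(σ²/(1−r)) ≤ (1 − r²)^{−n} F(σ²)²`. -/
theorem F_logconcavity_bound
    (n : ℕ) (K : Set (Fin n → ℝ)) (hK : IsCompact K) (hKc : Convex ℝ K)
    (hKint : (interior K).Nonempty)
    (φ : (Fin n → ℝ) → ℝ)
    (hφcont : ContinuousOn φ (interior K))
    (hφconv : ConvexOn ℝ (interior K) φ)
    (σ r : ℝ) (hσ : 0 < σ) (hr0 : 0 ≤ r) (hr1 : r < 1) :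
    barF n K φ (σ ^ 2 / (1 + r)) * barF n K φ (σ ^ 2 / (1 - r)) ≤
      (1 - r ^ 2) ^ (-(n : ℝ)) * (barF n K φ (σ ^ 2)) ^ 2 := by
  set D := interior K with hD
  have hDo : IsOpen D := isOpen_interior
  have hDm : MeasurableSet D := hDo.measurableSet
  have hDconv : Convex ℝ D := hKc.interior
  have hσ2 : (0:ℝ) < σ ^ 2 := by positivity
  have h1r : (0:ℝ) < 1 + r := by linarith
  have h2r : (0:ℝ) < 1 - r := by linarith
  have hr2 : (0:ℝ) < 1 - r ^ 2 := by nlinarith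
  set a0 : ℝ := (σ ^ 2)⁻¹ with ha0def
  set a1 : ℝ := (1 + r) / σ ^ 2 with ha1def
  set a2 : ℝ := (1 - r) / σ ^ 2 with ha2def
  have ha0 : 0 < a0 := by positivity
  have ha1 : 0 < a1 := by positivity
  have ha2 : 0 < a2 := by positivity
  -- the local integrals
  set I : ℝ → ℝ≥0∞ := fun a => ∫⁻ x in D, ENNReal.ofReal (Real.exp (-(a * φ x))) with hI
  have hφae : AEMeasurable φ (volume.restrict D) := hφcont.aemeasurable hDm
  have hIae : ∀ a : ℝ, AEMeasurable (fun x => ENNReal.ofReal (Real.exp (-(a * φ x))))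
      (volume.restrict D) := fun a =>
    ENNReal.measurable_ofReal.comp_aemeasurable
      (Real.measurable_exp.comp_aemeasurable (hφae.const_mul a).neg)
  -- barF representation
  have hbar : ∀ u : ℝ, 0 < u → barF n K φ u = (I u⁻¹).toReal := by
    intro u hu
    have hfun : ∀ x, Real.exp (-φ x / u) = Real.exp (-(u⁻¹ * φ x)) := fun x => by
      congr 1; ring
    rw [barF]
    simp_rw [hfun]
    exact integral_eq_lintegral_of_nonneg_ae (f := fun x => Real.exp (-(u⁻¹ * φ x)))
      (Filter.Eventually.of_forall fun x => (Real.exp_pos _).le)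
      ((Real.measurable_exp.comp_aemeasurable (hφae.const_mul u⁻¹).neg).aestronglyMeasurable)
  -- the transported functions
  set F : ℝ → (Fin n → ℝ) → ℝ≥0∞ := fun a =>
    (a • D).indicator (fun y => ENNReal.ofReal (Real.exp (-(a * φ (a⁻¹ • y))))) with hF
  have hFmeas : ∀ a : ℝ, 0 < a → Measurable (F a) := by
    intro a ha
    apply measurable_indicator_of_continuousOn (hDo.smul₀ (ne_of_gt ha))
    have h1 : ContinuousOn (fun y : Fin n → ℝ => φ (a⁻¹ • y)) (a • D) := by
      apply hφcont.comp (continuous_const_smul (a⁻¹ : ℝ)).continuousOn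
      intro y hy
      exact (mem_smul_set_iff_inv_smul_mem₀ (ne_of_gt ha) _ _).mp hy
    exact (ENNReal.continuous_ofReal.comp
      (Real.continuous_exp.comp ((continuous_const.mul continuous_id).neg))).comp_continuousOn h1
  -- change of variables
  have hJ : ∀ a : ℝ, 0 < a → ∫⁻ y, F a y = ENNReal.ofReal (a ^ n) * I a := by
    intro a ha
    have hrank : Module.finrank ℝ (Fin n → ℝ) = n := by simp
    have hmap : Measure.map (fun x : Fin n → ℝ => a • x) volume
        = ENNReal.ofReal |(a ^ Module.finrank ℝ (Fin n → ℝ))⁻¹| • volume :=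
      Measure.map_addHaar_smul volume (ne_of_gt ha)
    rw [hrank] at hmap
    have hcomp : ∀ x : Fin n → ℝ, F a (a • x)
        = D.indicator (fun x => ENNReal.ofReal (Real.exp (-(a * φ x)))) x := by
      intro x
      by_cases hx : x ∈ D
      · simp only [hF]
        rw [Set.indicator_of_mem (smul_mem_smul_set hx),
          Set.indicator_of_mem hx, inv_smul_smul₀ (ne_of_gt ha)]
      · simp only [hF]
        rw [Set.indicator_of_notMem (fun hc => hx ((smul_mem_smul_set_iff₀ (ne_of_gt ha) D x).mp hc)),
          Set.indicator_of_notMem hx]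
    have h1 : ∫⁻ x, F a (a • x) = ENNReal.ofReal |(a ^ n)⁻¹| * ∫⁻ y, F a y := by
      rw [← lintegral_map (hFmeas a ha) (measurable_const_smul a), hmap, lintegral_smul_measure, smul_eq_mul]
    have h2 : ∫⁻ x, F a (a • x) = I a := by
      rw [lintegral_congr hcomp, lintegral_indicator hDm]
    have hcancel : ENNReal.ofReal (a ^ n) * ENNReal.ofReal |(a ^ n)⁻¹| = 1 := by
      rw [abs_of_pos (by positivity), ← ENNReal.ofReal_mul (by positivity)]
      rw [mul_inv_cancel₀ (by positivity)]
      exact ENNReal.ofReal_one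
    rw [← h2, h1, ← mul_assoc, hcancel, one_mul]
  -- the Prékopa–Leindler hypothesis
  have hhyp : ∀ x y, F a1 x * F a2 y ≤ F a0 ((2 : ℝ)⁻¹ • (x + y)) ^ 2 := by
    intro x y
    by_cases hx : x ∈ a1 • D
    · by_cases hy : y ∈ a2 • D
      · set x' := a1⁻¹ • x with hx'def
        set y' := a2⁻¹ • y with hy'def
        have hx' : x' ∈ D := (mem_smul_set_iff_inv_smul_mem₀ (ne_of_gt ha1) _ _).mp hx
        have hy' : y' ∈ D := (mem_smul_set_iff_inv_smul_mem₀ (ne_of_gt ha2) _ _).mp hy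
        set θ1 : ℝ := (1 + r) / 2 with hθ1def
        set θ2 : ℝ := (1 - r) / 2 with hθ2def
        have hθ1 : 0 ≤ θ1 := by positivity
        have hθ2 : 0 ≤ θ2 := by positivity
        have hθsum : θ1 + θ2 = 1 := by rw [hθ1def, hθ2def]; ring
        set z' := θ1 • x' + θ2 • y' with hz'def
        have hz' : z' ∈ D := hDconv hx' hy' hθ1 hθ2 hθsum
        have hmid : (2 : ℝ)⁻¹ • (x + y) = a0 • z' := by
          rw [hz'def, hx'def, hy'def, smul_add, smul_add, smul_smul, smul_smul,
            smul_smul, smul_smul]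
          congr 1
          · congr 1
            rw [ha0def, hθ1def, ha1def]
            field_simp
          · congr 1
            rw [ha0def, hθ2def, ha2def]
            field_simp
        have hmem : (2 : ℝ)⁻¹ • (x + y) ∈ a0 • D := by
          rw [hmid]; exact smul_mem_smul_set hz'
        simp only [hF]
        rw [Set.indicator_of_mem hx, Set.indicator_of_mem hy, Set.indicator_of_mem hmem]
        have harg : a0⁻¹ • ((2 : ℝ)⁻¹ • (x + y)) = z' := by
          rw [hmid, inv_smul_smul₀ (ne_of_gt ha0)]
        rw [harg]
        rw [← hx'def, ← hy'def]
        rw [← ENNReal.ofReal_mul (Real.exp_pos _).le, ← Real.exp_add, pow_two,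
          ← ENNReal.ofReal_mul (Real.exp_pos _).le, ← Real.exp_add]
        apply ENNReal.ofReal_le_ofReal
        apply Real.exp_le_exp.mpr
        have hconv := hφconv.2 hx' hy' hθ1 hθ2 hθsum
        rw [← hz'def] at hconv
        have h2a0 : (0:ℝ) ≤ 2 * a0 := by positivity
        rw [smul_eq_mul, smul_eq_mul] at hconv
        have hmul := mul_le_mul_of_nonneg_left hconv h2a0
        have e1 : 2 * a0 * θ1 = a1 := by
          rw [ha0def, hθ1def, ha1def]; field_simp
        have e2 : 2 * a0 * θ2 = a2 := by
          rw [ha0def, hθ2def, ha2def]; field_simp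
        have e1' : 2 * a0 * θ1 * φ x' = a1 * φ x' := by rw [e1]
        have e2' : 2 * a0 * θ2 * φ y' = a2 * φ y' := by rw [e2]
        have hmul' : 2 * a0 * φ z' ≤ a1 * φ x' + a2 * φ y' := by
          linarith [hmul, e1', e2']
        linarith [hmul']
      · simp only [hF]
        rw [Set.indicator_of_notMem hy, mul_zero]
        exact zero_le
    · simp only [hF]
      rw [Set.indicator_of_notMem hx, zero_mul]
      exact zero_le
  -- apply Prékopa–Leindler
  have hPL := isPLMeasure_pi n (F a1) (F a2) (F a0) (hFmeas a1 ha1) (hFmeas a2 ha2)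
    (hFmeas a0 ha0) hhyp
  rw [hJ a1 ha1, hJ a2 ha2, hJ a0 ha0] at hPL
  -- clean up the constants
  set c : ℝ := ((1 - r ^ 2)⁻¹) ^ n with hcdef
  have hc0 : 0 ≤ c := by positivity
  have hkey : I a1 * I a2 ≤ ENNReal.ofReal c * (I a0) ^ 2 := by
    have hbase : a0 ^ 2 = a1 * a2 * (1 - r ^ 2)⁻¹ := by
      rw [ha0def, ha1def, ha2def]
      field_simp
      ring
    have hconst : (a0 ^ n) ^ 2 = (a1 ^ n * a2 ^ n) * c := by
      calc (a0 ^ n) ^ 2 = (a0 ^ 2) ^ n := by rw [← pow_mul, ← pow_mul, mul_comm]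
        _ = (a1 * a2 * (1 - r ^ 2)⁻¹) ^ n := by rw [hbase]
        _ = (a1 ^ n * a2 ^ n) * c := by rw [mul_pow, mul_pow, hcdef]
    have hne0 : ENNReal.ofReal (a1 ^ n * a2 ^ n) ≠ 0 :=
      (ENNReal.ofReal_pos.mpr (by positivity)).ne'
    refine (ENNReal.mul_le_mul_iff_right hne0 ENNReal.ofReal_ne_top).mp ?_
    calc ENNReal.ofReal (a1 ^ n * a2 ^ n) * (I a1 * I a2)
        = (ENNReal.ofReal (a1 ^ n) * I a1) * (ENNReal.ofReal (a2 ^ n) * I a2) := by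
          rw [ENNReal.ofReal_mul (by positivity)]
          ring
      _ ≤ (ENNReal.ofReal (a0 ^ n) * I a0) ^ 2 := hPL
      _ = ENNReal.ofReal ((a0 ^ n) ^ 2) * (I a0) ^ 2 := by
          rw [mul_pow, ← ENNReal.ofReal_pow (by positivity)]
      _ = ENNReal.ofReal (a1 ^ n * a2 ^ n) * (ENNReal.ofReal c * (I a0) ^ 2) := by
          rw [hconst, ENNReal.ofReal_mul (by positivity), mul_assoc]
  -- rewrite the goal in terms of I
  have hu1 : (σ ^ 2 / (1 + r))⁻¹ = a1 := by rw [inv_div, ha1def]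
  have hu2 : (σ ^ 2 / (1 - r))⁻¹ = a2 := by rw [inv_div, ha2def]
  have hu0 : (σ ^ 2)⁻¹ = a0 := by rw [ha0def]
  rw [hbar _ (by positivity), hbar _ (by positivity), hbar _ hσ2, hu1, hu2, hu0]
  have hrpos : (0:ℝ) < (1 - r ^ 2) ^ (-(n : ℝ)) := Real.rpow_pos_of_pos hr2 _
  rcases eq_or_ne (I a1) ∞ with h1 | h1
  · rw [h1, ENNReal.toReal_top, zero_mul]
    exact mul_nonneg hrpos.le (sq_nonneg _)
  rcases eq_or_ne (I a2) ∞ with h2 | h2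
  · rw [h2, ENNReal.toReal_top, mul_zero]
    exact mul_nonneg hrpos.le (sq_nonneg _)
  -- finiteness of I a0
  have ha12 : a1 + a2 = 2 * a0 := by
    rw [ha0def, ha1def, ha2def]
    field_simp
    ring
  have hptwise : ∀ x, ENNReal.ofReal (Real.exp (-(a0 * φ x)))
      ≤ 2⁻¹ * (ENNReal.ofReal (Real.exp (-(a1 * φ x))) + ENNReal.ofReal (Real.exp (-(a2 * φ x)))) := by
    intro x
    have hreal : Real.exp (-(a0 * φ x))
        ≤ (Real.exp (-(a1 * φ x)) + Real.exp (-(a2 * φ x))) / 2 := by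
      have h := two_mul_le_add_sq (Real.exp (-(a1 * φ x) / 2)) (Real.exp (-(a2 * φ x) / 2))
      have e1 : Real.exp (-(a1 * φ x) / 2) ^ 2 = Real.exp (-(a1 * φ x)) := by
        rw [pow_two, ← Real.exp_add]
        congr 1
        ring
      have e2 : Real.exp (-(a2 * φ x) / 2) ^ 2 = Real.exp (-(a2 * φ x)) := by
        rw [pow_two, ← Real.exp_add]
        congr 1
        ring
      have e3 : Real.exp (-(a1 * φ x) / 2) * Real.exp (-(a2 * φ x) / 2)
          = Real.exp (-(a0 * φ x)) := by
        rw [← Real.exp_add]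
        congr 1
        linear_combination (-(φ x) / 2) * ha12
      rw [e1, e2, mul_assoc] at h
      rw [e3] at h
      linarith
    calc ENNReal.ofReal (Real.exp (-(a0 * φ x)))
        ≤ ENNReal.ofReal ((Real.exp (-(a1 * φ x)) + Real.exp (-(a2 * φ x))) / 2) :=
          ENNReal.ofReal_le_ofReal hreal
      _ = 2⁻¹ * (ENNReal.ofReal (Real.exp (-(a1 * φ x))) + ENNReal.ofReal (Real.exp (-(a2 * φ x)))) := by
          rw [div_eq_inv_mul, ENNReal.ofReal_mul (by norm_num),
            ENNReal.ofReal_add (Real.exp_pos _).le (Real.exp_pos _).le]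
          congr 1
          rw [ENNReal.ofReal_inv_of_pos (by norm_num : (0:ℝ) < 2)]
          norm_num
  have hI0le : I a0 ≤ 2⁻¹ * (I a1 + I a2) := by
    calc I a0 ≤ ∫⁻ x in D, 2⁻¹ * (ENNReal.ofReal (Real.exp (-(a1 * φ x)))
          + ENNReal.ofReal (Real.exp (-(a2 * φ x)))) := lintegral_mono fun x => hptwise x
      _ = 2⁻¹ * (I a1 + I a2) := by
          rw [lintegral_const_mul' _ _ (by norm_num), lintegral_add_left' (hIae a1)]
  have hI0top : I a0 ≠ ∞ :=
    ne_top_of_le_ne_top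
      (ENNReal.mul_ne_top (by norm_num) (ENNReal.add_ne_top.mpr ⟨h1, h2⟩)) hI0le
  have hrhs_ne : ENNReal.ofReal c * (I a0) ^ 2 ≠ ∞ :=
    ENNReal.mul_ne_top ENNReal.ofReal_ne_top (ENNReal.pow_ne_top hI0top)
  have hfin := ENNReal.toReal_mono hrhs_ne hkey
  rw [ENNReal.toReal_mul] at hfin
  rw [ENNReal.toReal_mul, ENNReal.toReal_pow, ENNReal.toReal_ofReal hc0] at hfin
  have hrpow : (1 - r ^ 2) ^ (-(n : ℝ)) = c := by
    rw [hcdef, Real.rpow_neg hr2.le, Real.rpow_natCast, inv_pow]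
  rw [hrpow]
  exact hfin
end
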